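/- Let F be a finite field contained as a subring (with the same identity) in a finite commutative ring R of finite length, and let V ⊆ F^n be an F-subspace. Then the R-submodule of R^n generated by V has length λ(R)·dim_F(V). -/

import Mathlib

set_option maxHeartbeats 1000000
set_option synthInstance.maxHeartbeats 400000

open Order

section OrderPrelim

variable {α : Type*} [PartialOrder α]

private lemma myLTSeries_length_lt_card [Fintype α] (p : LTSeries α) :
    p.length < Fintype.card α := by
  have := Fintype.card_le_of_injective p.toFun p.strictMono.injective
  simpa using this

instance (priority := 50) myFDO {α : Type*} [PartialOrder α] [Finite α] [Nonempty α] :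
    FiniteDimensionalOrder α := by
  have _i := Fintype.ofFinite α
  have hbdd : BddAbove (Set.range (fun p : LTSeries α => p.length)) :=
    ⟨Fintype.card α, by rintro x ⟨p, rfl⟩; exact (myLTSeries_length_lt_card p).le⟩
  have hne : (Set.range (fun p : LTSeries α => p.length)).Nonempty :=
    ⟨_, ⟨RelSeries.singleton _ (Classical.arbitrary α), rfl⟩⟩
  obtain ⟨p, hp⟩ := Nat.sSup_mem hne hbdd
  exact ⟨⟨p, fun q => by
    simp only at hp
    rw [hp]
    exact le_csSup hbdd ⟨q, rfl⟩⟩⟩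

/-- The length of a poset: the length of its longest chain. -/
noncomputable def myLen (α : Type*) [Preorder α] [FiniteDimensionalOrder α] : ℕ :=
  (LTSeries.longestOf α).length

private lemma myLen_eq (α : Type*) [Preorder α] [FiniteDimensionalOrder α] :
    ((Order.krullDim α).unbotD 0).toNat = myLen α := by
  rw [Order.krullDim_eq_length_of_finiteDimensionalOrder]
  rfl

private lemma myLen_le_of_strictMono {β : Type*} [Preorder β]
    [FiniteDimensionalOrder α] [FiniteDimensionalOrder β]
    (f : α → β) (hf : StrictMono f) : myLen α ≤ myLen β :=
  LTSeries.longestOf_is_longest ((LTSeries.longestOf α).map f hf)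

private lemma myLen_orderIso {β : Type*} [PartialOrder β]
    [FiniteDimensionalOrder α] [FiniteDimensionalOrder β]
    (f : α ≃o β) : myLen α = myLen β :=
  le_antisymm (myLen_le_of_strictMono f f.strictMono)
    (myLen_le_of_strictMono f.symm f.symm.strictMono)

private lemma myHeight_lt_top [Finite α] (a : α) : Order.height a < ⊤ := by
  have _i := Fintype.ofFinite α
  refine lt_of_le_of_lt (Order.height_le fun p _ => ?_)
    (ENat.coe_lt_top (Fintype.card α))
  exact_mod_cast (myLTSeries_length_lt_card p).le

private lemma myHeight_le_len [Finite α] [Nonempty α] (a : α) :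
    Order.height a ≤ (myLen α : ℕ∞) := by
  have h := Order.height_le_krullDim a
  rw [Order.krullDim_eq_length_of_finiteDimensionalOrder] at h
  exact_mod_cast h

private lemma pair_length_le {β γ : Type*} [PartialOrder β] [PartialOrder γ]
    [Finite β] [Finite γ]
    (f : α → β) (g : α → γ) (hg : Monotone g)
    (hfg : ∀ ⦃a b : α⦄, a < b → f a < f b ∨ (f a ≤ f b ∧ g a < g b))
    (p : LTSeries α) :
    (p.length : ℕ∞) ≤ Order.height (f p.last) + Order.height (g p.last) := by
  suffices H : ∀ (m : ℕ) (p : LTSeries α), p.length = m →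
      (p.length : ℕ∞) ≤ Order.height (f p.last) + Order.height (g p.last) by
    exact H p.length p rfl
  intro m
  induction m with
  | zero => intro p hn; rw [hn]; simp
  | succ m ih =>
    intro p hn
    rw [hn]
    have h0 : p.eraseLast.length = m := by
      rw [RelSeries.eraseLast_length, hn]
      omega
    have hlast : p.eraseLast.last < p.last :=
      p.eraseLast_last_rel_last (by omega)
    have IH := ih p.eraseLast h0
    rw [h0] at IH
    have step : Order.height (f p.eraseLast.last) + Order.height (g p.eraseLast.last) + 1 ≤
        Order.height (f p.last) + Order.height (g p.last) := by
      rcases hfg hlast with hc | hc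
      · have h1 : Order.height (f p.eraseLast.last) + 1 ≤ Order.height (f p.last) := by
          rw [ENat.add_one_le_iff (myHeight_lt_top _).ne]
          exact Order.height_strictMono hc (myHeight_lt_top _)
        have h2 : Order.height (g p.eraseLast.last) ≤ Order.height (g p.last) :=
          Order.height_mono (hg hlast.le)
        calc Order.height (f p.eraseLast.last) + Order.height (g p.eraseLast.last) + 1
            = (Order.height (f p.eraseLast.last) + 1) + Order.height (g p.eraseLast.last) := by
              rw [add_right_comm]
          _ ≤ _ := add_le_add h1 h2
      · have h1 : Order.height (f p.eraseLast.last) ≤ Order.height (f p.last) :=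
          Order.height_mono hc.1
        have h2 : Order.height (g p.eraseLast.last) + 1 ≤ Order.height (g p.last) := by
          rw [ENat.add_one_le_iff (myHeight_lt_top _).ne]
          exact Order.height_strictMono hc.2 (myHeight_lt_top _)
        calc Order.height (f p.eraseLast.last) + Order.height (g p.eraseLast.last) + 1
            = Order.height (f p.eraseLast.last) + (Order.height (g p.eraseLast.last) + 1) := by
              rw [add_assoc]
          _ ≤ _ := add_le_add h1 h2
    calc ((m + 1 : ℕ) : ℕ∞) = (m : ℕ∞) + 1 := by push_cast; ring
      _ ≤ Order.height (f p.eraseLast.last) + Order.height (g p.eraseLast.last) + 1 :=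
          add_le_add IH le_rfl
      _ ≤ _ := step

private lemma length_le_myLen_add {β γ : Type*} [PartialOrder β] [PartialOrder γ]
    [Finite β] [Finite γ]
    (f : α → β) (g : α → γ) (hg : Monotone g)
    (hfg : ∀ ⦃a b : α⦄, a < b → f a < f b ∨ (f a ≤ f b ∧ g a < g b))
    (p : LTSeries α) :
    haveI : Nonempty β := ⟨f p.head⟩
    haveI : Nonempty γ := ⟨g p.head⟩
    p.length ≤ myLen β + myLen γ := by
  haveI : Nonempty β := ⟨f p.head⟩
  haveI : Nonempty γ := ⟨g p.head⟩
  have h := pair_length_le f g hg hfg p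
  have h2 : (p.length : ℕ∞) ≤ ((myLen β + myLen γ : ℕ) : ℕ∞) := by
    refine h.trans ?_
    push_cast
    exact add_le_add (myHeight_le_len _) (myHeight_le_len _)
  exact_mod_cast h2

private lemma exists_maximal_chain (α : Type*) [PartialOrder α] [BoundedOrder α]
    [FiniteDimensionalOrder α] :
    ∃ p : LTSeries α, myLen α ≤ p.length ∧ p.head = ⊥ ∧ p.last = ⊤ := by
  set p := LTSeries.longestOf α with hp
  have hh : p.head = ⊥ := by
    by_contra h
    have := LTSeries.longestOf_is_longest (p.cons ⊥ (bot_lt_iff_ne_bot.2 h))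
    rw [RelSeries.cons_length, ← hp] at this
    omega
  have hl : p.last = ⊤ := by
    by_contra h
    have := LTSeries.longestOf_is_longest (p.snoc ⊤ (lt_top_iff_ne_top.2 h))
    rw [RelSeries.snoc_length, ← hp] at this
    omega
  exact ⟨p, le_rfl, hh, hl⟩

private lemma myLen_eq_zero_of_subsingleton (α : Type*) [PartialOrder α] [Subsingleton α]
    [FiniteDimensionalOrder α] : myLen α = 0 := by
  by_contra h
  have := (LTSeries.longestOf α).step ⟨0, Nat.pos_of_ne_zero h⟩
  exact this.ne (Subsingleton.elim _ _)

end OrderPrelim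

section ModulePrelim

variable {R : Type*} [CommRing R]

instance (priority := 50) mySubmoduleFinite {M : Type*} [AddCommGroup M] [Module R M]
    [Finite M] : Finite (Submodule R M) :=
  Finite.of_injective _ SetLike.coe_injective

instance (priority := 50) myQuotFinite {M : Type*} [AddCommGroup M] [Module R M]
    [Finite M] (N : Submodule R M) : Finite (M ⧸ N) :=
  Finite.of_surjective _ N.mkQ_surjective

/-- Additivity of length for submodule lattices. -/
private lemma myLen_submodule_add {M : Type*} [AddCommGroup M] [Module R M] [Finite M]
    (N : Submodule R M) :
    myLen (Submodule R M) = myLen (Submodule R ↥N) + myLen (Submodule R (M ⧸ N)) := by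
  apply le_antisymm
  · -- upper bound
    have hub : ∀ p : LTSeries (Submodule R M),
        p.length ≤ myLen (Submodule R ↥N) + myLen (Submodule R (M ⧸ N)) := by
      intro p
      refine length_le_myLen_add (fun P => P.comap N.subtype) (fun P => P.map N.mkQ)
        (fun _ _ h => Submodule.map_mono h) ?_ p
      intro a b hab
      rcases lt_or_eq_of_le (Submodule.comap_mono (f := N.subtype) hab.le) with hlt | heq
      · exact Or.inl hlt
      · refine Or.inr ⟨heq.le, lt_of_le_of_ne (Submodule.map_mono hab.le) fun hmap => ?_⟩
        have hmap' : Submodule.map N.mkQ a = Submodule.map N.mkQ b := hmap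
        refine hab.ne (eq_of_le_of_inf_le_of_sup_le (z := N) hab.le ?_ ?_)
        · have h1 : N ⊓ a = N ⊓ b := by
            rw [← Submodule.map_comap_subtype, ← Submodule.map_comap_subtype, heq]
          rw [inf_comm b N, inf_comm a N, ← h1]
        · have h2 : a ⊔ LinearMap.ker N.mkQ = b ⊔ LinearMap.ker N.mkQ := by
            rw [← Submodule.comap_map_eq, ← Submodule.comap_map_eq, hmap']
          rw [Submodule.ker_mkQ] at h2
          rw [← h2]
    exact hub (LTSeries.longestOf _)
  · -- lower bound
    obtain ⟨p, hp, -, hpl⟩ := exists_maximal_chain (Submodule R ↥N)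
    obtain ⟨q, hq, hqh, -⟩ := exists_maximal_chain (Submodule R (M ⧸ N))
    have sm1 : StrictMono (Submodule.map N.subtype) :=
      Monotone.strictMono_of_injective (fun _ _ h => Submodule.map_mono h)
        (Submodule.map_injective_of_injective N.injective_subtype)
    have sm2 : StrictMono (Submodule.comap N.mkQ) :=
      Monotone.strictMono_of_injective (fun _ _ h => Submodule.comap_mono h)
        (Submodule.comap_injective_of_surjective N.mkQ_surjective)
    let p' := p.map (Submodule.map N.subtype) sm1
    let q' := q.map (Submodule.comap N.mkQ) sm2
    have hconn : p'.last = q'.head := by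
      show Submodule.map N.subtype p.last = Submodule.comap N.mkQ q.head
      rw [hpl, hqh, Submodule.map_subtype_top, Submodule.comap_bot, Submodule.ker_mkQ]
    have hlen : (p'.smash q' hconn).length = p.length + q.length := rfl
    have := LTSeries.longestOf_is_longest (α := Submodule R M) (p'.smash q' hconn)
    rw [hlen] at this
    calc myLen (Submodule R ↥N) + myLen (Submodule R (M ⧸ N)) ≤ p.length + q.length :=
          add_le_add hp hq
      _ ≤ myLen (Submodule R M) := this

private lemma myLen_submodule_congr {M M' : Type*} [AddCommGroup M] [Module R M]
    [AddCommGroup M'] [Module R M'] [Finite M] [Finite M'] (e : M ≃ₗ[R] M') :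
    myLen (Submodule R M) = myLen (Submodule R M') :=
  myLen_orderIso (Submodule.orderIsoMapComap e)

private lemma myLen_submodule_prod (M M' : Type*) [AddCommGroup M] [Module R M]
    [AddCommGroup M'] [Module R M'] [Finite M] [Finite M'] :
    myLen (Submodule R (M × M')) = myLen (Submodule R M) + myLen (Submodule R M') := by
  have hN := myLen_submodule_add (R := R) (M := M × M')
    (LinearMap.ker (LinearMap.snd R M M'))
  have e1 : M ≃ₗ[R] ↥(LinearMap.ker (LinearMap.snd R M M')) :=
    (LinearEquiv.ofInjective (LinearMap.inl R M M') LinearMap.inl_injective).trans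
      (LinearEquiv.ofEq _ _ (LinearMap.range_inl R M M'))
  have e2 : ((M × M') ⧸ LinearMap.ker (LinearMap.snd R M M')) ≃ₗ[R] M' :=
    (LinearMap.snd R M M').quotKerEquivOfSurjective (fun x => ⟨(0, x), rfl⟩)
  rw [hN, myLen_submodule_congr e1.symm, myLen_submodule_congr e2]

private lemma myLen_submodule_pi [Finite R] (d : ℕ) :
    myLen (Submodule R (Fin d → R)) = d * myLen (Submodule R R) := by
  induction d with
  | zero =>
    haveI : Subsingleton (Fin 0 → R) := ⟨fun a b => funext fun i => i.elim0⟩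
    simpa using myLen_eq_zero_of_subsingleton (Submodule R (Fin 0 → R))
  | succ d ih =>
    have e : (Fin (d + 1) → R) ≃ₗ[R] R × (Fin d → R) :=
      (LinearEquiv.funCongrLeft R R ((finSuccEquiv d).symm : Option (Fin d) ≃ Fin (d + 1))).trans
        (LinearEquiv.piOptionEquivProd R)
    rw [myLen_submodule_congr e, myLen_submodule_prod, ih]
    ring

/-- Image of an `F`-basis of `Fⁿ` under a ring embedding `ι : F →+* R` is
`R`-linearly independent in `Rⁿ`. -/
private lemma li_map_basis {F : Type*} [Field F] [Finite R] [Nontrivial R] (ι : F →+* R) {n : ℕ}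
    {κ : Type*} [Fintype κ] (B : Module.Basis κ F (Fin n → F)) :
    LinearIndependent R (fun k (i : Fin n) => ι (B k i)) := by
  classical
  have hcard : Fintype.card κ = n := by
    have h := Module.finrank_eq_card_basis B
    rw [Module.finrank_fin_fun] at h
    omega
  let e := Fintype.equivFinOfCardEq hcard
  -- reduce to the reindexed basis
  have main : LinearIndependent R (fun j (i : Fin n) => ι ((B.reindex e) j i)) := by
    set B' := B.reindex e with hB'
    let A : Matrix (Fin n) (Fin n) F := (Pi.basisFun F (Fin n)).toMatrix B'
    haveI : Invertible A := (Pi.basisFun F (Fin n)).invertibleToMatrix B'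
    have hA : ∀ i j, A i j = B' j i := by
      intro i j
      show (Pi.basisFun F (Fin n)).toMatrix ⇑B' i j = B' j i
      rw [Module.Basis.toMatrix_apply, Pi.basisFun_repr]
    haveI : Invertible (ι.mapMatrix A) := Invertible.map ι.mapMatrix A
    rw [Fintype.linearIndependent_iff]
    intro g hg j
    have hmv : (ι.mapMatrix A).mulVec g = 0 := by
      funext i
      have := congrFun hg i
      simp only [Finset.sum_apply, Pi.smul_apply, smul_eq_mul, Pi.zero_apply] at this
      simp only [Matrix.mulVec, dotProduct, RingHom.mapMatrix_apply, Matrix.map_apply,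
        Pi.zero_apply]
      rw [← this]
      refine Finset.sum_congr rfl fun k _ => ?_
      rw [hA i k, mul_comm]
    have : g = 0 := by
      have h1 : (⅟(ι.mapMatrix A)).mulVec ((ι.mapMatrix A).mulVec g) = g := by
        rw [Matrix.mulVec_mulVec, invOf_mul_self, Matrix.one_mulVec]
      rw [hmv, Matrix.mulVec_zero] at h1
      exact h1.symm
    rw [this]
    rfl
  have : (fun k (i : Fin n) => ι (B k i)) = (fun j (i : Fin n) => ι ((B.reindex e) j i)) ∘ e := by
    funext k
    simp [Module.Basis.reindex_apply]
  rw [this]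
  exact main.comp e e.injective

end ModulePrelim

/-- The length of a submodule `N` of `M`. -/
noncomputable def submodLength {R : Type*} [Ring R] {M : Type*} [AddCommGroup M]
    [Module R M] (N : Submodule R M) : ℕ :=
  ((Order.krullDim (Submodule R ↥N)).unbotD 0).toNat

/-- The length of the ring `R` as a module over itself. -/
noncomputable def ringLength (R : Type*) [CommRing R] : ℕ :=
  ((Order.krullDim (Ideal R)).unbotD 0).toNat

/-- Let `F` be a finite field contained as a subring (same identity,
i.e. via a ring embedding `ι : F →+* R`) of a finite commutative ring `R`, and let
`V ⊆ Fⁿ` be an `F`-subspace. Then the `R`-submodule of `Rⁿ` generated by (the image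
of) `V` has length `λ(R) · dim_F V`. -/
theorem length_span_of_subspace (F : Type*) [Field F] [Finite F]
    (R : Type*) [CommRing R] [Finite R] (ι : F →+* R) (n : ℕ)
    (V : Subspace F (Fin n → F)) :
    submodLength (Submodule.span R ((fun v : Fin n → F => fun i => ι (v i)) '' V)) =
      ringLength R * Module.finrank F ↥V := by
  classical
  rcases subsingleton_or_nontrivial R with hR | hR
  · haveI : Unique (Submodule R ↥(Submodule.span R
        ((fun v : Fin n → F => fun i => ι (v i)) '' ↑V))) := uniqueOfSubsingleton ⊥
    haveI : Unique (Ideal R) := uniqueOfSubsingleton ⊥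
    unfold submodLength ringLength
    rw [Order.krullDim_eq_zero_of_unique (α := Submodule R ↥(Submodule.span R
        ((fun v : Fin n → F => fun i => ι (v i)) '' ↑V))), Order.krullDim_eq_zero_of_unique (α := Ideal R)]
    simp
  letI : Algebra F R := ι.toAlgebra
  haveI : Module.Finite F ↥V := Module.Finite.of_finite
  set d := Module.finrank F ↥V with hd
  let b : Module.Basis (Fin d) F ↥V := Module.finBasis F ↥V
  -- the embedding map as an F-linear map
  let φ : (Fin n → F) →ₗ[F] (Fin n → R) :=
    LinearMap.pi fun i => (Algebra.linearMap F R).comp (LinearMap.proj i)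
  have hφ : ∀ v : Fin n → F, φ v = fun i => ι (v i) := fun v => rfl
  have hsm : ∀ (c : F) (x : Fin n → R), c • x = ι c • x := by
    intro c x
    funext i
    rw [Pi.smul_apply, Pi.smul_apply, Algebra.smul_def, smul_eq_mul]
    rfl
  let w : Fin d → (Fin n → R) := fun j => φ ((b j : ↥V) : Fin n → F)
  -- span equality
  have hspan : Submodule.span R ((fun v : Fin n → F => fun i => ι (v i)) '' ↑V) =
      Submodule.span R (Set.range w) := by
    apply le_antisymm
    · rw [Submodule.span_le]
      rintro _ ⟨v, hv, rfl⟩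
      have hrep : (⟨v, hv⟩ : ↥V) = ∑ j, b.repr ⟨v, hv⟩ j • b j := (b.sum_repr _).symm
      have hv2 : v = ∑ j, b.repr ⟨v, hv⟩ j • ((b j : ↥V) : Fin n → F) := by
        have := congrArg (Subtype.val : ↥V → (Fin n → F)) hrep
        simpa only [Submodule.coe_sum, Submodule.coe_smul] using this
      have key : (fun i => ι (v i)) = ∑ j, ι (b.repr ⟨v, hv⟩ j) • w j := by
        rw [← hφ]
        calc φ v = φ (∑ j, b.repr ⟨v, hv⟩ j • ((b j : ↥V) : Fin n → F)) := congrArg φ hv2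
          _ = ∑ j, b.repr ⟨v, hv⟩ j • φ ((b j : ↥V) : Fin n → F) := by
              rw [map_sum]
              exact Finset.sum_congr rfl fun j _ => by rw [map_smul]
          _ = ∑ j, ι (b.repr ⟨v, hv⟩ j) • w j :=
              Finset.sum_congr rfl fun j _ => hsm _ _
      show (fun i => ι (v i)) ∈ (Submodule.span R (Set.range w) : Set (Fin n → R))
      rw [SetLike.mem_coe, key]
      exact Submodule.sum_mem _ fun j _ =>
        Submodule.smul_mem _ _ (Submodule.subset_span ⟨j, rfl⟩)
    · rw [Submodule.span_le]
      rintro _ ⟨j, rfl⟩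
      exact Submodule.subset_span ⟨((b j : ↥V) : Fin n → F), (b j : ↥V).2, rfl⟩
  -- linear independence of w over R
  have hbV : LinearIndependent F (fun j => ((b j : ↥V) : Fin n → F)) :=
    b.linearIndependent.map' V.subtype (Submodule.ker_subtype V)
  have hbVs : LinearIndepOn F id (Set.range (fun j => ((b j : ↥V) : Fin n → F))) :=
    hbV.linearIndepOn_id
  let t := hbVs.extend (Set.subset_univ _)
  let B : Module.Basis ↥t F (Fin n → F) := Module.Basis.extend hbVs
  haveI : Fintype ↥t := Fintype.ofFinite _
  have hBLI : LinearIndependent R (fun (k : ↥t) (i : Fin n) => ι (B k i)) :=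
    li_map_basis ι B
  have hmem : ∀ j : Fin d, ((b j : ↥V) : Fin n → F) ∈ t :=
    fun j => hbVs.subset_extend (Set.subset_univ _) ⟨j, rfl⟩
  let h : Fin d → ↥t := fun j => ⟨((b j : ↥V) : Fin n → F), hmem j⟩
  have hinj : Function.Injective h := by
    have h1 : Function.Injective (Subtype.val ∘ h) := hbV.injective
    exact h1.of_comp
  have hw : LinearIndependent R w := by
    have hcomp : w = (fun (k : ↥t) (i : Fin n) => ι (B k i)) ∘ h := by
      funext j
      show φ ((b j : ↥V) : Fin n → F) = fun i => ι (B (h j) i)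
      rw [hφ]
      have : B (h j) = ((b j : ↥V) : Fin n → F) := Module.Basis.extend_apply_self hbVs (h j)
      rw [this]
    rw [hcomp]
    exact hBLI.comp h hinj
  -- basis of the span and computation of the length
  let Bspan : Module.Basis (Fin d) R ↥(Submodule.span R (Set.range w)) := Module.Basis.span hw
  let eSpan : ↥(Submodule.span R (Set.range w)) ≃ₗ[R] (Fin d → R) := Bspan.equivFun
  have hfinal : submodLength (Submodule.span R (Set.range w)) = ringLength R * d := by
    unfold submodLength ringLength
    rw [myLen_eq, myLen_eq]
    rw [myLen_submodule_congr eSpan, myLen_submodule_pi d]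
    have : myLen (Ideal R) = myLen (Submodule R R) := rfl
    rw [this, mul_comm]
  rw [hspan, hfinal]
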